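/- For z ∈ Ĩ_n with involution code ĉ(z) = (c_1, ..., c_n): the involution length satisfies ℓ̂(z) = c_1 + c_2 + ... + c_n, and an integer i is a visible descent of z if and only if c_i > c_{i+1} (indices modulo n). -/

import Mathlib

open scoped TensorProduct

/-- Membership in the affine symmetric group `S̃_n`, viewed inside `Equiv.Perm ℤ`. -/
def IsAffine (n : ℕ) (π : Equiv.Perm ℤ) : Prop :=
  (∀ i : ℤ, π (i + n) = π i + n) ∧
  (∑ i ∈ Finset.Icc (1 : ℤ) (n : ℤ), π i) = ∑ i ∈ Finset.Icc (1 : ℤ) (n : ℤ), i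

/-- The underlying function of the affine reflection `t_{ij}`. -/
def affTFun (n : ℕ) (i j k : ℤ) : ℤ :=
  if (k - i) % (n : ℤ) = 0 then k - i + j
  else if (k - j) % (n : ℤ) = 0 then k - j + i
  else k

theorem affTFun_involutive {n : ℕ} {i j : ℤ} (h : ¬ (j - i) % (n : ℤ) = 0) :
    Function.Involutive (affTFun n i j) := by
  have key : ∀ a : ℤ, a % (n : ℤ) = 0 ↔ (n : ℤ) ∣ a :=
    fun a => (@Int.dvd_iff_emod_eq_zero (n : ℤ) a).symm
  rw [key] at h
  intro k
  by_cases h1 : (n : ℤ) ∣ (k - i)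
  · have h2 : ¬ (n : ℤ) ∣ (k - i + j - i) := by
      intro hd
      apply h
      have h5 : j - i = (k - i + j - i) - (k - i) := by ring
      rw [h5]
      exact dvd_sub hd h1
    have h3 : (n : ℤ) ∣ (k - i + j - j) := by
      have h5 : k - i + j - j = k - i := by ring
      rw [h5]; exact h1
    have e1 : affTFun n i j k = k - i + j := by simp [affTFun, key, h1]
    have e2 : affTFun n i j (k - i + j) = k := by
      simp only [affTFun, key]
      rw [if_neg h2, if_pos h3]
      ring
    rw [e1, e2]
  · by_cases h2 : (n : ℤ) ∣ (k - j)
    · have h3 : (n : ℤ) ∣ (k - j + i - i) := by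
        have h5 : k - j + i - i = k - j := by ring
        rw [h5]; exact h2
      have e1 : affTFun n i j k = k - j + i := by simp [affTFun, key, h1, h2]
      have e2 : affTFun n i j (k - j + i) = k := by
        simp only [affTFun, key]
        rw [if_pos h3]
        ring
      rw [e1, e2]
    · have e1 : affTFun n i j k = k := by simp [affTFun, key, h1, h2]
      rw [e1, e1]

/-- The affine reflection `t_{ij}` (interpreted as the identity when `i ≡ j (mod n)`). -/
noncomputable def affT (n : ℕ) (i j : ℤ) : Equiv.Perm ℤ :=
  if h : (j - i) % (n : ℤ) = 0 then 1
  else Function.Involutive.toPerm _ (affTFun_involutive h)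

/-- The simple reflection `s_i = t_{i,i+1}` of `S̃_n`. -/
noncomputable def affS (n : ℕ) (i : ℤ) : Equiv.Perm ℤ := affT n i (i + 1)

/-- Coxeter length: minimal length of a word in the simple reflections `s_1, …, s_n`. -/
noncomputable def wordLength (n : ℕ) (π : Equiv.Perm ℤ) : ℕ :=
  sInf {l : ℕ | ∃ w : List ℤ,
    (∀ x ∈ w, 1 ≤ x ∧ x ≤ (n : ℤ)) ∧ (w.map (affS n)).prod = π ∧ w.length = l}

/-- The set of inversions of `π`, up to the diagonal translation relation. -/
def InvPair (π : Equiv.Perm ℤ) : Type :=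
  {p : ℤ × ℤ // p.1 < p.2 ∧ π p.2 < π p.1}

/-- The number of equivalence classes of inversions of `π` under
`(a,b) ~ (a + mn, b + mn)`. -/
noncomputable def invLength (n : ℕ) (π : Equiv.Perm ℤ) : ℕ :=
  Nat.card (Quot fun p q : InvPair π =>
    ∃ m : ℤ, q.1.1 = p.1.1 + m * n ∧ q.1.2 = p.1.2 + m * n)

/-- Entry `c_i` of the code of an affine permutation. -/
noncomputable def codeEntry (π : Equiv.Perm ℤ) (i : ℤ) : ℕ :=
  Nat.card {j : ℤ // i < j ∧ π j < π i}

/-- Entry `ĉ_i` of the involution code of an affine involution. -/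
noncomputable def icodeEntry (z : Equiv.Perm ℤ) (i : ℤ) : ℕ :=
  Nat.card {j : ℤ // i < j ∧ z j < z i ∧ z j ≤ i}

/-- `ℓ'(z)`: `n` minus the number of orbits of `z` acting on `ℤ/nℤ`. -/
noncomputable def lprime (n : ℕ) (z : Equiv.Perm ℤ) : ℕ :=
  n - Nat.card (Quot fun a b : ZMod n => ((z (a.val : ℤ) : ℤ) : ZMod n) = b)

/-- The characterizing properties of the Demazure (0-Hecke) product on `S̃_n`:
closure, associativity, `s_i ∘ s_i = s_i`, and agreement with the group product
on length-additive factorizations. -/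
def IsDemazure (n : ℕ) (D : Equiv.Perm ℤ → Equiv.Perm ℤ → Equiv.Perm ℤ) : Prop :=
  (∀ a b, IsAffine n a → IsAffine n b → IsAffine n (D a b)) ∧
  (∀ a b c, IsAffine n a → IsAffine n b → IsAffine n c →
    D (D a b) c = D a (D b c)) ∧
  (∀ i : ℤ, D (affS n i) (affS n i) = affS n i) ∧
  (∀ a b, IsAffine n a → IsAffine n b →
    wordLength n (a * b) = wordLength n a + wordLength n b → D a b = a * b)

/-- The set of Hecke atoms `{π : π⁻¹ ∘ π = z}`. -/
def AHecke (n : ℕ) (D : Equiv.Perm ℤ → Equiv.Perm ℤ → Equiv.Perm ℤ)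
    (z : Equiv.Perm ℤ) : Set (Equiv.Perm ℤ) :=
  {π | IsAffine n π ∧ D π⁻¹ π = z}

/-- The set of atoms: minimal-length Hecke atoms. -/
def DemAtoms (n : ℕ) (D : Equiv.Perm ℤ → Equiv.Perm ℤ → Equiv.Perm ℤ)
    (z : Equiv.Perm ℤ) : Set (Equiv.Perm ℤ) :=
  {π | π ∈ AHecke n D z ∧ ∀ σ ∈ AHecke n D z, wordLength n π ≤ wordLength n σ}

/-- The Bruhat covering relation on `S̃_n`. -/
def BruhatCov (n : ℕ) (a b : Equiv.Perm ℤ) : Prop :=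
  (∃ i j : ℤ, i < j ∧ (j - i) % (n : ℤ) ≠ 0 ∧ b = a * affT n i j) ∧
  wordLength n b = wordLength n a + 1

/-- The Bruhat order on `S̃_n`. -/
def BruhatLE (n : ℕ) : Equiv.Perm ℤ → Equiv.Perm ℤ → Prop :=
  Relation.ReflTransGen (BruhatCov n)

/-- The covering relation of the Bruhat order restricted to involutions in `S̃_n`. -/
def BruhatCovI (n : ℕ) (y z : Equiv.Perm ℤ) : Prop :=
  IsAffine n y ∧ IsAffine n z ∧ y⁻¹ = y ∧ z⁻¹ = z ∧
  BruhatLE n y z ∧ y ≠ z ∧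
  ∀ w : Equiv.Perm ℤ, IsAffine n w → w⁻¹ = w →
    BruhatLE n y w → BruhatLE n w z → w = y ∨ w = z

/-- Strict dominance order on partitions (written as weakly decreasing functions). -/
def DomLT (p q : ℕ → ℕ) : Prop :=
  p ≠ q ∧ ∀ k : ℕ, ∑ i ∈ Finset.range k, p i ≤ ∑ i ∈ Finset.range k, q i

/-- The shape `λ(π)`: the transpose of the partition sorting the code of `π⁻¹`,
recorded as the weakly decreasing function `k ↦ λ(π)_{k+1}`. -/
noncomputable def affShape (n : ℕ) (π : Equiv.Perm ℤ) : ℕ → ℕ :=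
  fun k => Multiset.countP (fun x => k < x)
    ((Finset.Icc (1 : ℤ) (n : ℤ)).val.map (codeEntry π⁻¹))

/-- The shape `μ(z)`: the transpose of the partition sorting the involution code of `z`,
recorded as the weakly decreasing function `k ↦ μ(z)_{k+1}`. -/
noncomputable def invShape (n : ℕ) (z : Equiv.Perm ℤ) : ℕ → ℕ :=
  fun k => Multiset.countP (fun x => k < x)
    ((Finset.Icc (1 : ℤ) (n : ℤ)).val.map (icodeEntry z))

/-- The weakly decreasing rearrangement of a multiset of naturals, padded by zeros. -/
noncomputable def rearr (s : Multiset ℕ) : ℕ → ℕ :=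
  fun k => ((s.sort (· ≤ ·)).reverse).getD k 0

/-- Remove the entries of a list of integers that repeat an earlier residue mod `n`. -/
def dedupMod (n : ℕ) : List ℤ → List ℤ
  | [] => []
  | x :: xs => x :: dedupMod n (xs.filter fun y => (y - x) % (n : ℤ) ≠ 0)
termination_by l => l.length
decreasing_by
  simp only [List.length_cons, List.length_unattach]
  exact Nat.lt_succ_of_le ((List.length_filter_le _ _).trans (by simp))

/-- The window `[[z(a₁), a₁, z(a₂), a₂, …]]` of `α_min(z)⁻¹`, where `a₁ < a₂ < ⋯`
are the elements `a ∈ [n]` with `a ≤ z(a)`. -/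
noncomputable def aminWindow (n : ℕ) (z : Equiv.Perm ℤ) : List ℤ :=
  dedupMod n
    ((((Finset.Icc (1 : ℤ) (n : ℤ)).sort (· ≤ ·)).filter fun a => a ≤ z a).flatMap
      fun a => [z a, a])

/-- Cyclically decreasing elements of `S̃_n`. -/
def IsCycDec (n : ℕ) (π : Equiv.Perm ℤ) : Prop :=
  ∃ w : List ℤ,
    (∀ x ∈ w, 1 ≤ x ∧ x ≤ (n : ℤ)) ∧ (w.map (affS n)).prod = π ∧
    w.length = wordLength n π ∧
    w.Pairwise fun a b => (a + 1 - b) % (n : ℤ) ≠ 0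

/-- The coefficient of the monomial `∏ₖ xₖ₊₁^(α k)` in Lam's affine Stanley symmetric
function `F_π`: the number of length-additive factorizations of `π` into cyclically
decreasing factors of lengths prescribed by `α`. -/
noncomputable def stanleyCoeff (n : ℕ) (π : Equiv.Perm ℤ) (α : ℕ →₀ ℕ) : ℕ :=
  Nat.card {f : ℕ → Equiv.Perm ℤ //
    (∀ k, IsCycDec n (f k)) ∧ (∀ k, wordLength n (f k) = α k) ∧
    (∑ k ∈ α.support, α k) = wordLength n π ∧
    ∃ N : ℕ, (∀ k, N ≤ k → f k = 1) ∧ ((List.range N).map f).prod = π}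

/-- The set `Φ⁻_r(y)` of Bruhat covers of `y` of the form `τⁿ_{i r}(y)` with `i < r`
and `i ∉ {r, y(r)} + nℤ`. -/
def PhiMinus (n : ℕ) (τ : ℤ → ℤ → Equiv.Perm ℤ → Equiv.Perm ℤ)
    (y : Equiv.Perm ℤ) (r : ℤ) : Set (Equiv.Perm ℤ) :=
  {z | BruhatCovI n y z ∧ ∃ i : ℤ, i < r ∧ (i - r) % (n : ℤ) ≠ 0 ∧
    (i - y r) % (n : ℤ) ≠ 0 ∧ z = τ i r y}

/-- The set `Φ⁺_r(y)` of Bruhat covers of `y` of the form `τⁿ_{r j}(y)` with `r < j`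
and `j ∉ {r, y(r)} + nℤ`. -/
def PhiPlus (n : ℕ) (τ : ℤ → ℤ → Equiv.Perm ℤ → Equiv.Perm ℤ)
    (y : Equiv.Perm ℤ) (r : ℤ) : Set (Equiv.Perm ℤ) :=
  {z | BruhatCovI n y z ∧ ∃ j : ℤ, r < j ∧ (j - r) % (n : ℤ) ≠ 0 ∧
    (j - y r) % (n : ℤ) ≠ 0 ∧ z = τ r j y}

/-- The affine symmetric group as a subtype of `Equiv.Perm ℤ`. -/
abbrev AffPerm (n : ℕ) := {π : Equiv.Perm ℤ // IsAffine n π}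

/-- The coproduct `Δ(π) = Σ_{π ≐ π'π''} π' ⊗ π''` on `ℚ S̃_n`. -/
noncomputable def affComul (n : ℕ) :
    (AffPerm n →₀ ℚ) →ₗ[ℚ] TensorProduct ℚ (AffPerm n →₀ ℚ) (AffPerm n →₀ ℚ) :=
  Finsupp.lift _ ℚ _ fun π : AffPerm n =>
    ∑ᶠ p ∈ {p : AffPerm n × AffPerm n |
        p.1.val * p.2.val = π.val ∧
        wordLength n π.val = wordLength n p.1.val + wordLength n p.2.val},
      (Finsupp.single p.1 (1 : ℚ)) ⊗ₜ[ℚ] (Finsupp.single p.2 (1 : ℚ))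

namespace MZAux


variable {n : ℕ}

lemma perm_apply_inv_self (f : Equiv.Perm ℤ) (x : ℤ) : f (f⁻¹ x) = x := f.apply_symm_apply x

lemma perm_inv_apply_self (f : Equiv.Perm ℤ) (x : ℤ) : f⁻¹ (f x) = x := f.symm_apply_apply x

/-- Shift property of an affine permutation. -/
def Shifty (n : ℕ) (π : Equiv.Perm ℤ) : Prop := ∀ i : ℤ, π (i + n) = π i + n

lemma shifty_mul_int {π : Equiv.Perm ℤ} (h : Shifty n π) (i m : ℤ) :
    π (i + m * n) = π i + m * n := by
  induction m using Int.induction_on with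
  | zero => simp
  | succ k ih =>
      have := h (i + k * n)
      push_cast at *
      rw [show i + (k+1) * n = (i + k * n) + n by ring, this, ih]; ring
  | pred k ih =>
      have := h (i + (-(k+1)) * n)
      rw [show (i + (-(k+1):ℤ) * n) + n = i + (-k) * n by ring] at this
      push_cast at *
      have e : π (i + (-↑k - 1) * ↑n) = π (i + -↑k * ↑n) - n := by
        rw [this]; ring
      rw [e, ih]; ring

lemma shifty_inv {π : Equiv.Perm ℤ} (h : Shifty n π) : Shifty n π⁻¹ := by
  intro i
  have := h (π⁻¹ i)
  apply π.injective
  rw [perm_apply_inv_self, this, perm_apply_inv_self]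

lemma shifty_mul {π σ : Equiv.Perm ℤ} (hπ : Shifty n π) (hσ : Shifty n σ) :
    Shifty n (π * σ) := by
  intro i
  simp only [Equiv.Perm.mul_apply, hσ i, hπ (σ i)]

/-- normalization into the window `[1, n]`. -/
def normFst (n : ℕ) (i : ℤ) : ℤ := (i - 1) % (n : ℤ) + 1

lemma normFst_mem (hn : 0 < n) (i : ℤ) : normFst n i ∈ Finset.Icc (1 : ℤ) (n : ℤ) := by
  have h1 : (0:ℤ) < n := by exact_mod_cast hn
  have := Int.emod_nonneg (i - 1) (by exact_mod_cast hn.ne' : (n:ℤ) ≠ 0)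
  have := Int.emod_lt_of_pos (i - 1) h1
  simp only [Finset.mem_Icc, normFst]; omega

lemma normFst_sub_dvd (hn : 0 < n) (i : ℤ) : (n : ℤ) ∣ (normFst n i - i) := by
  have := Int.emod_emod_of_dvd (i-1) (dvd_refl (n:ℤ))
  have h := Int.emod_add_mul_ediv (i - 1) (n : ℤ)
  exact ⟨-((i-1) / n), by rw [normFst]; linarith [h]⟩

lemma normFst_eq_self (hn : 0 < n) {i : ℤ} (hi : i ∈ Finset.Icc (1:ℤ) (n:ℤ)) :
    normFst n i = i := by
  simp only [Finset.mem_Icc] at hi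
  rw [normFst, Int.emod_eq_of_lt (by omega) (by omega)]; omega

lemma normFst_add_mul (hn : 0 < n) (i m : ℤ) : normFst n (i + m * n) = normFst n i := by
  rw [normFst, normFst, show i + m * n - 1 = (i - 1) + m * n by ring, Int.add_mul_emod_self_right]

lemma window_unique (hn : 0 < n) {i j : ℤ} (hi : i ∈ Finset.Icc (1:ℤ) (n:ℤ))
    (hj : j ∈ Finset.Icc (1:ℤ) (n:ℤ)) (h : (n:ℤ) ∣ (j - i)) : i = j := by
  simp only [Finset.mem_Icc] at hi hj
  rcases h with ⟨m, hm⟩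
  have hn' : (1:ℤ) ≤ n := by exact_mod_cast hn
  rcases lt_trichotomy m 0 with h' | h' | h'
  · have h2 : m ≤ -1 := by omega
    nlinarith
  · subst h'
    simp at hm
    omega
  · have h2 : 1 ≤ m := by omega
    nlinarith

lemma normFst_eq_of_dvd (hn : 0 < n) {i j : ℤ} (h : (n:ℤ) ∣ (j - i)) :
    normFst n i = normFst n j := by
  rcases h with ⟨m, hm⟩
  rw [show j = i + m * n by linarith, normFst_add_mul hn]


/-- key finiteness: the inversion set in each row is finite. -/
lemma inv_row_finite (hn : 0 < n) {π : Equiv.Perm ℤ} (hπ : Shifty n π) (i : ℤ) :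
    {j : ℤ | i < j ∧ π j < π i}.Finite := by
  classical
  have hne : (Finset.Icc (1:ℤ) (n:ℤ)).Nonempty := ⟨1, by simp [Finset.mem_Icc]; exact_mod_cast hn⟩
  set C : ℤ := (Finset.Icc (1:ℤ) (n:ℤ)).sup' hne (fun r => r - π r) with hC
  apply Set.Finite.subset (Set.finite_Icc (i+1) (π i + C))
  rintro j ⟨h1, h2⟩
  constructor
  · omega
  · set r : ℤ := normFst n j with hr
    obtain ⟨m, hm⟩ := normFst_sub_dvd hn j
    have hπj : π j = π r + (j - r) := by
      have := shifty_mul_int hπ r (-m)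
      rw [show r + (-m) * n = j by linarith] at this
      rw [this]
      have : j - r = -m * n := by linarith
      rw [this]
    have hrC : r - π r ≤ C := Finset.le_sup' (fun r => r - π r) (normFst_mem hn j)
    omega

/-- pair sets over the window -/
def pairSet (n : ℕ) (Q : ℤ → ℤ → Prop) : Set (ℤ × ℤ) :=
  {p | p.1 ∈ Finset.Icc (1:ℤ) (n:ℤ) ∧ Q p.1 p.2}

lemma pairSet_finite (Q : ℤ → ℤ → Prop) (hfin : ∀ i, {j | Q i j}.Finite) :
    (pairSet n Q).Finite := by
  have : pairSet n Q ⊆ ⋃ i ∈ Finset.Icc (1:ℤ) (n:ℤ), Prod.mk i '' {j | Q i j} := by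
    rintro ⟨a, b⟩ ⟨h1, h2⟩
    exact Set.mem_biUnion h1 ⟨b, h2, rfl⟩
  exact Set.Finite.subset (Set.Finite.biUnion (Finset.finite_toSet _)
    (fun i _ => (hfin i).image _)) this

lemma pairSet_card (Q : ℤ → ℤ → Prop) (hfin : ∀ i, {j | Q i j}.Finite) :
    Nat.card (pairSet n Q) = ∑ i ∈ Finset.Icc (1:ℤ) (n:ℤ), Nat.card {j | Q i j} := by
  classical
  have hfs := pairSet_finite (n := n) Q hfin
  have key : hfs.toFinset = (Finset.Icc (1:ℤ) (n:ℤ)).biUnion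
      (fun i => ((hfin i).toFinset).image (Prod.mk i)) := by
    ext ⟨a, b⟩
    simp only [Set.Finite.mem_toFinset, Finset.mem_biUnion, Finset.mem_image, pairSet,
      Set.mem_setOf_eq]
    constructor
    · rintro ⟨h1, h2⟩
      exact ⟨a, h1, b, by simpa using h2, rfl⟩
    · rintro ⟨i, hi, j, hj, hij⟩
      rw [Prod.mk.injEq] at hij
      obtain ⟨rfl, rfl⟩ := hij
      exact ⟨hi, by simpa using hj⟩
  have h1 : Nat.card (pairSet n Q) = hfs.toFinset.card := by
    rw [Nat.card_coe_set_eq, Set.ncard_eq_toFinset_card _ hfs]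
  rw [h1, key, Finset.card_biUnion]
  · apply Finset.sum_congr rfl
    intro i _
    rw [Finset.card_image_of_injective _ (fun a b h => (Prod.mk.injEq .. ▸ h).2),
      Nat.card_coe_set_eq, Set.ncard_eq_toFinset_card _ (hfin i)]
  · intro a _ b _ hab
    simp only [Finset.disjoint_left, Finset.mem_image]
    rintro ⟨x, y⟩ ⟨j, _, hj⟩ ⟨j', _, hj'⟩
    rw [Prod.mk.injEq] at hj hj'
    exact hab (hj.1.trans hj'.1.symm)


lemma dvd_iff_emod (m a : ℤ) : a % m = 0 ↔ m ∣ a := Int.dvd_iff_emod_eq_zero.symm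

lemma one_emod_ne (hn2 : 2 ≤ n) : ¬ ((1:ℤ) % (n:ℤ) = 0) := by
  rw [Int.emod_eq_of_lt (by omega) (by exact_mod_cast hn2)]
  omega

lemma affS_apply (hn2 : 2 ≤ n) (i k : ℤ) :
    affS n i k = if (k - i) % (n:ℤ) = 0 then k + 1
      else if (k - (i+1)) % (n:ℤ) = 0 then k - 1 else k := by
  have h1 : ¬ ((i + 1 - i) % (n:ℤ) = 0) := by
    rw [show i + 1 - i = (1:ℤ) by ring]; exact one_emod_ne hn2
  rw [affS, affT, dif_neg h1]
  show affTFun n i (i+1) k = _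
  rw [affTFun]
  by_cases hP : (k - i) % (n:ℤ) = 0
  · rw [if_pos hP, if_pos hP]; ring
  · rw [if_neg hP, if_neg hP]
    by_cases hQ : (k - (i+1)) % (n:ℤ) = 0
    · rw [if_pos hQ, if_pos hQ]; ring
    · rw [if_neg hQ, if_neg hQ]

lemma affS_shifty (hn2 : 2 ≤ n) (i : ℤ) : Shifty n (affS n i) := by
  intro k
  rw [affS_apply hn2, affS_apply hn2]
  have e1 : (k + n - i) % (n:ℤ) = (k - i) % (n:ℤ) := by
    rw [show k + (n:ℤ) - i = (k - i) + 1 * n by ring, Int.add_mul_emod_self_right]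
  have e2 : (k + n - (i+1)) % (n:ℤ) = (k - (i+1)) % (n:ℤ) := by
    rw [show k + (n:ℤ) - (i+1) = (k - (i+1)) + 1 * n by ring, Int.add_mul_emod_self_right]
  rw [e1, e2]
  split_ifs <;> ring

lemma affS_invol (hn2 : 2 ≤ n) (i : ℤ) : ∀ k, affS n i (affS n i k) = k := by
  have h1 : ¬ ((i + 1 - i) % (n:ℤ) = 0) := by
    rw [show i + 1 - i = (1:ℤ) by ring]; exact one_emod_ne hn2
  intro k
  rw [affS, affT, dif_neg h1]
  exact affTFun_involutive h1 k

lemma affS_sq (hn2 : 2 ≤ n) (i : ℤ) : affS n i * affS n i = 1 := by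
  ext k
  simp only [Equiv.Perm.mul_apply, Equiv.Perm.one_apply]
  exact affS_invol hn2 i k

lemma affS_apply_self (hn2 : 2 ≤ n) (i : ℤ) : affS n i i = i + 1 := by
  rw [affS_apply hn2, if_pos (by simp)]

lemma affS_apply_succ (hn2 : 2 ≤ n) (i : ℤ) : affS n i (i+1) = i := by
  rw [affS_apply hn2, if_neg (by rw [show i+1-i = (1:ℤ) by ring]; exact one_emod_ne hn2),
    if_pos (by simp)]
  ring

lemma filter_res_card (hn : 0 < n) (i : ℤ) :
    ((Finset.Icc (1:ℤ) (n:ℤ)).filter (fun k => (k - i) % (n:ℤ) = 0)).card = 1 := by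
  classical
  rw [Finset.card_eq_one]
  refine ⟨normFst n i, ?_⟩
  ext k
  simp only [Finset.mem_filter, Finset.mem_singleton]
  constructor
  · rintro ⟨hk, hmod⟩
    rw [dvd_iff_emod] at hmod
    have h2 := dvd_sub (normFst_sub_dvd hn i) hmod
    rw [show normFst n i - i - (k - i) = normFst n i - k by ring] at h2
    exact window_unique hn hk (normFst_mem hn i) h2
  · rintro rfl
    refine ⟨normFst_mem hn i, ?_⟩
    rw [dvd_iff_emod]
    exact normFst_sub_dvd hn i

lemma isAffine_affS (hn2 : 2 ≤ n) (i : ℤ) : IsAffine n (affS n i) := by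
  have hn : 0 < n := by omega
  constructor
  · exact affS_shifty hn2 i
  · have key : ∀ k ∈ Finset.Icc (1:ℤ) (n:ℤ), affS n i k =
        k + ((if (k - i) % (n:ℤ) = 0 then (1:ℤ) else 0) +
             (if (k - (i+1)) % (n:ℤ) = 0 then (-1:ℤ) else 0)) := by
      intro k _
      rw [affS_apply hn2]
      by_cases hP : (k - i) % (n:ℤ) = 0
      · have hQ : ¬ (k - (i+1)) % (n:ℤ) = 0 := by
          rw [dvd_iff_emod] at hP ⊢
          intro hQ
          have : (n:ℤ) ∣ 1 := by
            have := dvd_sub hP hQ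
            rwa [show k - i - (k - (i+1)) = (1:ℤ) by ring] at this
          have := Int.le_of_dvd (by omega) this
          omega
        rw [if_pos hP, if_pos hP, if_neg hQ]; ring
      · rw [if_neg hP, if_neg hP]
        by_cases hQ : (k - (i+1)) % (n:ℤ) = 0
        · rw [if_pos hQ, if_pos hQ]; ring
        · rw [if_neg hQ, if_neg hQ]; ring
    rw [Finset.sum_congr rfl key, Finset.sum_add_distrib, Finset.sum_add_distrib,
      ← Finset.sum_filter, ← Finset.sum_filter]
    rw [Finset.sum_const, Finset.sum_const, filter_res_card hn i, filter_res_card hn (i+1)]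
    simp

lemma isAffine_shifty {π : Equiv.Perm ℤ} (h : IsAffine n π) : Shifty n π := h.1

lemma isAffine_one : IsAffine n 1 := ⟨fun i => rfl, rfl⟩

lemma shifty_res_bij (hn : 0 < n) {σ : Equiv.Perm ℤ} (hσ : Shifty n σ) :
    ∀ j ∈ Finset.Icc (1:ℤ) (n:ℤ), normFst n (σ⁻¹ j) ∈ Finset.Icc (1:ℤ) (n:ℤ) ∧
      normFst n (σ (normFst n (σ⁻¹ j))) = j := by
  intro j _
  refine ⟨normFst_mem hn _, ?_⟩
  obtain ⟨m, hm⟩ := normFst_sub_dvd hn (σ⁻¹ j)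
  have : σ (normFst n (σ⁻¹ j)) = j + (n:ℤ) * m := by
    rw [show normFst n (σ⁻¹ j) = σ⁻¹ j + m * n by linarith, shifty_mul_int hσ,
      perm_apply_inv_self]
    ring
  rw [this]
  rw [show j + (n:ℤ)*m = j + m * n by ring, normFst_add_mul hn]
  exact normFst_eq_self hn (by assumption)

lemma isAffine_mul {π σ : Equiv.Perm ℤ} (hn : 0 < n) (hπ : IsAffine n π) (hσ : IsAffine n σ) :
    IsAffine n (π * σ) := by
  obtain ⟨hπ1, hπ2⟩ := hπ
  obtain ⟨hσ1, hσ2⟩ := hσ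
  refine ⟨shifty_mul hπ1 hσ1, ?_⟩
  have key : ∀ k ∈ Finset.Icc (1:ℤ) (n:ℤ),
      (π * σ) k = π (normFst n (σ k)) + (σ k - normFst n (σ k)) := by
    intro k _
    obtain ⟨m, hm⟩ := normFst_sub_dvd hn (σ k)
    have : π (normFst n (σ k)) = π (σ k) + m * n := by
      rw [show normFst n (σ k) = σ k + m * n by linarith, shifty_mul_int hπ1]
    simp only [Equiv.Perm.mul_apply]
    rw [this]
    have : σ k - normFst n (σ k) = - (m * n) := by linarith
    rw [this]; ring
  rw [Finset.sum_congr rfl key, Finset.sum_add_distrib, Finset.sum_sub_distrib]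
  have hbij : ∀ f : ℤ → ℤ, ∑ k ∈ Finset.Icc (1:ℤ) (n:ℤ), f (normFst n (σ k)) =
      ∑ j ∈ Finset.Icc (1:ℤ) (n:ℤ), f j := by
    intro f
    apply Finset.sum_nbij' (fun k => normFst n (σ k)) (fun j => normFst n (σ⁻¹ j))
    · intro k _; exact normFst_mem hn _
    · intro j _; exact normFst_mem hn _
    · intro k hk
      -- normFst n (σ⁻¹ (normFst n (σ k))) = k
      obtain ⟨m, hm⟩ := normFst_sub_dvd hn (σ k)
      have : σ⁻¹ (normFst n (σ k)) = k + m * n := by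
        rw [show normFst n (σ k) = σ k + m * n by linarith, shifty_mul_int (shifty_inv hσ1),
          perm_inv_apply_self]
      rw [this, normFst_add_mul hn, normFst_eq_self hn hk]
    · intro j hj
      exact (shifty_res_bij hn hσ1 j hj).2
    · intro k _; rfl
  have h3 : ∑ x ∈ Finset.Icc (1:ℤ) (n:ℤ), normFst n (σ x) = ∑ j ∈ Finset.Icc (1:ℤ) (n:ℤ), j :=
    hbij (fun j => j)
  rw [hbij (fun j => π j), h3, hπ2, hσ2]
  ring


noncomputable def S (n : ℕ) (π : Equiv.Perm ℤ) : ℕ :=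
  ∑ i ∈ Finset.Icc (1:ℤ) (n:ℤ), codeEntry π i

lemma S_eq_card (hn : 0 < n) {π : Equiv.Perm ℤ} (hπ : Shifty n π) :
    S n π = Nat.card (pairSet n (fun i j => i < j ∧ π j < π i)) := by
  rw [pairSet_card _ (fun i => inv_row_finite hn hπ i)]
  rfl

/-- the normalization map on pairs -/
def nu (n : ℕ) (p : ℤ × ℤ) : ℤ × ℤ := (normFst n p.1, p.2 + (normFst n p.1 - p.1))

lemma nu_shift (hn : 0 < n) (p : ℤ × ℤ) (m : ℤ) :
    nu n (p.1 + m*n, p.2 + m*n) = nu n p := by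
  rw [nu, nu, normFst_add_mul hn]
  simp only [Prod.mk.injEq, true_and]
  ring

lemma nu_eq_self (hn : 0 < n) {p : ℤ × ℤ} (h : p.1 ∈ Finset.Icc (1:ℤ) (n:ℤ)) :
    nu n p = p := by
  rw [nu, normFst_eq_self hn h]
  simp

lemma s_not_sorted (hn2 : 2 ≤ n) {i0 a b : ℤ} (hab : a < b)
    (hs : ¬ affS n i0 a < affS n i0 b) :
    b = a + 1 ∧ (a - i0) % (n:ℤ) = 0 ∧ affS n i0 a = a + 1 ∧ affS n i0 b = b - 1 := by
  have hne : affS n i0 a ≠ affS n i0 b := fun h => hab.ne ((affS n i0).injective h)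
  have hlt : affS n i0 b < affS n i0 a := lt_of_le_of_ne (not_lt.mp hs) (Ne.symm hne)
  have ha := affS_apply hn2 i0 a
  have hb := affS_apply hn2 i0 b
  split_ifs at ha hb
  all_goals first
    | (exact ⟨by omega, by assumption, by omega, by omega⟩)
    | omega

lemma S_mul_affS (hn2 : 2 ≤ n) {π : Equiv.Perm ℤ} (hπ : Shifty n π) {i0 : ℤ}
    (h : π i0 < π (i0+1)) : S n (π * affS n i0) = S n π + 1 := by
  classical
  have hn : 0 < n := by omega
  set s : Equiv.Perm ℤ := affS n i0 with hsdef
  have hs : Shifty n s := affS_shifty hn2 i0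
  have hss : ∀ k, s (s k) = k := affS_invol hn2 i0
  have hσ : Shifty n (π * s) := shifty_mul hπ hs
  set A : Set (ℤ × ℤ) := pairSet n (fun i j => i < j ∧ (π * s) j < (π * s) i) with hAdef
  set B : Set (ℤ × ℤ) := pairSet n (fun i j => i < j ∧ π j < π i) with hBdef
  have hAfin : A.Finite := pairSet_finite _ (fun i => inv_row_finite hn hσ i)
  have hBfin : B.Finite := pairSet_finite _ (fun i => inv_row_finite hn hπ i)
  set r0 : ℤ := normFst n i0 with hr0
  obtain ⟨m0, hm0⟩ := normFst_sub_dvd hn i0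
  have hm0' : m0 * (n:ℤ) = (n:ℤ) * m0 := mul_comm _ _
  have hr0mem : r0 ∈ Finset.Icc (1:ℤ) (n:ℤ) := normFst_mem hn i0
  have hsr0 : s r0 = r0 + 1 := by
    rw [hsdef, affS_apply hn2, if_pos (by rw [dvd_iff_emod]; exact ⟨m0, hm0⟩)]
  have hsr1 : s (r0 + 1) = r0 := by
    rw [hsdef, affS_apply hn2]
    rw [if_neg, if_pos]
    · ring
    · rw [dvd_iff_emod]
      rw [show r0 + 1 - (i0 + 1) = r0 - i0 by ring]
      exact ⟨m0, hm0⟩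
    · rw [dvd_iff_emod]
      rintro ⟨m, hm⟩
      have h1 : (n:ℤ) ∣ 1 := ⟨m - m0, by linarith [hm0, hm]⟩
      have := Int.le_of_dvd (by omega) h1
      omega
  have hπr0 : π r0 = π i0 + (r0 - i0) := by
    have := shifty_mul_int hπ i0 m0
    rw [show i0 + m0 * n = r0 by omega] at this
    rw [this]; omega
  have hπr1 : π (r0 + 1) = π (i0 + 1) + (r0 - i0) := by
    have := shifty_mul_int hπ (i0+1) m0
    rw [show i0 + 1 + m0 * n = r0 + 1 by omega] at this
    rw [this]; omega
  set C0 : ℤ × ℤ := (r0, r0 + 1) with hC0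
  have hC0A : C0 ∈ A := by
    rw [hC0]
    refine ⟨hr0mem, show r0 < r0 + 1 by omega, ?_⟩
    show (π * s) (r0 + 1) < (π * s) r0
    simp only [Equiv.Perm.mul_apply, hsr0, hsr1, hπr0, hπr1]
    omega
  set Φ : ℤ × ℤ → ℤ × ℤ := fun p => nu n (s p.1, s p.2) with hΦ
  -- Φ is involutive on window-first pairs
  have main3 : ∀ p : ℤ × ℤ, p.1 ∈ Finset.Icc (1:ℤ) (n:ℤ) → Φ (Φ p) = p := by
    rintro ⟨a, b⟩ hmem
    obtain ⟨m, hm⟩ := normFst_sub_dvd hn (s a)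
    have hm' : m * (n:ℤ) = (n:ℤ) * m := mul_comm _ _
    have hfst : Φ (a, b) = (s a + (n:ℤ)*m, s b + (n:ℤ)*m) := by
      simp only [hΦ, nu, Prod.mk.injEq]
      constructor <;> omega
    rw [hfst]
    have e1 : s (s a + (n:ℤ)*m) = a + (n:ℤ)*m := by
      have := shifty_mul_int hs (s a) m
      rw [show s a + m * n = s a + (n:ℤ)*m by ring] at this
      rw [this, hss a]; ring
    have e2 : s (s b + (n:ℤ)*m) = b + (n:ℤ)*m := by
      have := shifty_mul_int hs (s b) m
      rw [show s b + m * n = s b + (n:ℤ)*m by ring] at this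
      rw [this, hss b]; ring
    show nu n (s (s a + (n:ℤ)*m), s (s b + (n:ℤ)*m)) = (a, b)
    rw [e1, e2]
    have := nu_shift hn (a, b) m
    simp only at this
    rw [show (a + (n:ℤ)*m, b + (n:ℤ)*m) = (a + m * (n:ℤ), b + m * (n:ℤ)) by rw [Prod.mk.injEq]; constructor <;> ring]
    rw [this, nu_eq_self hn hmem]
  have main1 : ∀ p ∈ A \ {C0}, Φ p ∈ B := by
    rintro ⟨a, b⟩ ⟨⟨haW, hab, hinv⟩, hne⟩
    dsimp only at haW hab hinv
    have hsort : s a < s b := by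
      by_contra hc
      obtain ⟨h1, h2, _, _⟩ := s_not_sorted hn2 hab hc
      rw [dvd_iff_emod] at h2
      obtain ⟨m, hm⟩ := h2
      have haε : a = r0 := window_unique hn haW hr0mem ⟨m0 - m, by rw [mul_sub]; omega⟩
      exact hne (by simp only [Set.mem_singleton_iff, hC0, Prod.mk.injEq]; omega)
    obtain ⟨m, hm⟩ := normFst_sub_dvd hn (s a)
    have hm' : m * (n:ℤ) = (n:ℤ) * m := mul_comm _ _
    have hfst : Φ (a, b) = (s a + (n:ℤ)*m, s b + (n:ℤ)*m) := by
      simp only [hΦ, nu, Prod.mk.injEq]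
      constructor <;> omega
    rw [hfst]
    refine ⟨?_, show s a + (n:ℤ)*m < s b + (n:ℤ)*m by omega, ?_⟩
    · show s a + (n:ℤ)*m ∈ _
      have : s a + (n:ℤ)*m = normFst n (s a) := by omega
      rw [this]; exact normFst_mem hn _
    · show π (s b + (n:ℤ)*m) < π (s a + (n:ℤ)*m)
      have e1 := shifty_mul_int hπ (s a) m
      have e2 := shifty_mul_int hπ (s b) m
      rw [show s a + m*(n:ℤ) = s a + (n:ℤ)*m by ring] at e1
      rw [show s b + m*(n:ℤ) = s b + (n:ℤ)*m by ring] at e2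
      rw [e1, e2]
      simp only [Equiv.Perm.mul_apply] at hinv
      omega
  have main2 : ∀ q ∈ B, Φ q ∈ A \ {C0} := by
    rintro ⟨c, d⟩ ⟨hcW, hcd, hinv⟩
    dsimp only at hcW hcd hinv
    have hsort : s c < s d := by
      by_contra hc
      obtain ⟨h1, h2, _, _⟩ := s_not_sorted hn2 hcd hc
      rw [dvd_iff_emod] at h2
      obtain ⟨m, hm⟩ := h2
      have hmc : m * (n:ℤ) = (n:ℤ) * m := mul_comm _ _
      have e1 : π c = π i0 + (c - i0) := by
        have := shifty_mul_int hπ i0 m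
        rw [show i0 + m * n = c by omega] at this
        rw [this]; omega
      have e2 : π d = π (i0 + 1) + (c - i0) := by
        have := shifty_mul_int hπ (i0+1) m
        rw [show i0 + 1 + m * n = d by omega] at this
        rw [this]; omega
      omega
    obtain ⟨m, hm⟩ := normFst_sub_dvd hn (s c)
    have hm' : m * (n:ℤ) = (n:ℤ) * m := mul_comm _ _
    have hfst : Φ (c, d) = (s c + (n:ℤ)*m, s d + (n:ℤ)*m) := by
      simp only [hΦ, nu, Prod.mk.injEq]
      constructor <;> omega
    rw [hfst]
    have e1 : s (s c + (n:ℤ)*m) = c + (n:ℤ)*m := by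
      have := shifty_mul_int hs (s c) m
      rw [show s c + m * n = s c + (n:ℤ)*m by ring] at this
      rw [this, hss c]; ring
    have e2 : s (s d + (n:ℤ)*m) = d + (n:ℤ)*m := by
      have := shifty_mul_int hs (s d) m
      rw [show s d + m * n = s d + (n:ℤ)*m by ring] at this
      rw [this, hss d]; ring
    constructor
    · refine ⟨?_, show s c + (n:ℤ)*m < s d + (n:ℤ)*m by omega, ?_⟩
      · show s c + (n:ℤ)*m ∈ _
        have : s c + (n:ℤ)*m = normFst n (s c) := by omega
        rw [this]; exact normFst_mem hn _
      · show (π * s) (s d + (n:ℤ)*m) < (π * s) (s c + (n:ℤ)*m)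
        simp only [Equiv.Perm.mul_apply, e1, e2]
        have f1 := shifty_mul_int hπ c m
        have f2 := shifty_mul_int hπ d m
        rw [show c + m*(n:ℤ) = c + (n:ℤ)*m by ring] at f1
        rw [show d + m*(n:ℤ) = d + (n:ℤ)*m by ring] at f2
        rw [f1, f2]
        have hmc2 : m * (n:ℤ) = (n:ℤ) * m := mul_comm _ _
        omega
    · simp only [Set.mem_singleton_iff, hC0, Prod.mk.injEq, not_and]
      intro hc1 hc2
      exfalso
      have hscr : s c + (n:ℤ)*m = r0 := by omega
      have g1 : c + (n:ℤ)*m = r0 + 1 := by rw [← e1, hscr, hsr0]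
      have hsdr : s d + (n:ℤ)*m = r0 + 1 := by omega
      have g2 : d + (n:ℤ)*m = r0 := by rw [← e2, hsdr, hsr1]
      omega
  -- now conclude
  have himage : B = Φ '' (A \ {C0}) := by
    apply Set.eq_of_subset_of_subset
    · intro q hq
      refine ⟨Φ q, main2 q hq, main3 q hq.1⟩
    · rintro _ ⟨p, hp, rfl⟩
      exact main1 p hp
  have hinj : Set.InjOn Φ (A \ {C0}) := by
    intro p hp q hq hpq
    have := main3 p hp.1.1
    rw [hpq, main3 q hq.1.1] at this
    exact this.symm
  have hcard1 : (A \ {C0}).ncard + 1 = A.ncard := Set.ncard_diff_singleton_add_one hC0A hAfin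
  have hcard2 : B.ncard = (A \ {C0}).ncard := by
    rw [himage, Set.ncard_image_of_injOn hinj]
  rw [S_eq_card hn hσ, S_eq_card hn hπ, ← hAdef, ← hBdef,
    Nat.card_coe_set_eq, Nat.card_coe_set_eq]
  omega


lemma codeEntry_one (i : ℤ) : codeEntry 1 i = 0 := by
  have : IsEmpty {j : ℤ // i < j ∧ (1 : Equiv.Perm ℤ) j < (1 : Equiv.Perm ℤ) i} := by
    refine ⟨fun ⟨j, h1, h2⟩ => ?_⟩
    simp only [Equiv.Perm.one_apply] at h2
    omega
  exact Nat.card_of_isEmpty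

lemma S_one : S n 1 = 0 := by
  rw [S]
  apply Finset.sum_eq_zero
  intro i _
  exact codeEntry_one i

lemma eq_one_of_no_descent (hn : 0 < n) {π : Equiv.Perm ℤ} (hπ : IsAffine n π)
    (h : ∀ i ∈ Finset.Icc (1:ℤ) (n:ℤ), ¬ π (i+1) < π i) : π = 1 := by
  obtain ⟨h1, h2⟩ := hπ
  have hstep : ∀ i : ℤ, π i < π (i + 1) := by
    intro i
    set r := normFst n i with hr
    obtain ⟨m, hm⟩ := normFst_sub_dvd hn i
    have hm' : m * (n:ℤ) = (n:ℤ) * m := mul_comm _ _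
    have hmneg : (-m) * (n:ℤ) = -(m * (n:ℤ)) := by ring
    have e1 : π i = π r + (i - r) := by
      have := shifty_mul_int h1 r (-m)
      rw [show r + (-m) * n = i by omega] at this
      rw [this]; omega
    have e2 : π (i+1) = π (r+1) + (i - r) := by
      have := shifty_mul_int h1 (r+1) (-m)
      rw [show r + 1 + (-m) * n = i + 1 by omega] at this
      rw [this]; omega
    have hrr : π r < π (r+1) := by
      have hne : π (r+1) ≠ π r := fun hc => by
        have := π.injective hc; omega
      have := h r (normFst_mem hn i)
      omega
    omega
  have hsm : StrictMono π := strictMono_int_of_lt_succ hstep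
  have key : ∀ k : ℕ, ∀ i : ℤ, π i + k ≤ π (i + k) := by
    intro k
    induction k with
    | zero => simp
    | succ k ih =>
        intro i
        have h1' := ih i
        have h2' := hstep (i + k)
        push_cast
        have : (i + (k:ℤ)) + 1 = i + ((k:ℤ)+1) := by ring
        rw [this] at h2'
        push_cast at h1' h2'
        omega
  have hmono : ∀ i j : ℤ, i ≤ j → π i - i ≤ π j - j := by
    intro i j hij
    have := key (j - i).toNat i
    rw [show i + ((j - i).toNat : ℤ) = j by omega] at this
    omega
  set c : ℤ := π 1 - 1 with hc
  have hconst : ∀ i : ℤ, π i = i + c := by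
    intro i
    set m : ℤ := min (i - 1) 0 with hm
    set M : ℤ := max (i - 1) 0 with hM
    have hmn : m * (n:ℤ) ≤ m := by
      calc m * (n:ℤ) ≤ m * 1 := mul_le_mul_of_nonpos_left (by exact_mod_cast hn) (by omega)
      _ = m := by ring
    have hMn : M ≤ M * (n:ℤ) := by
      calc M = M * 1 := by ring
      _ ≤ M * (n:ℤ) := mul_le_mul_of_nonneg_left (by exact_mod_cast hn) (by omega)
    have e1 : π (1 + m * n) = π 1 + m * n := by
      have := shifty_mul_int h1 1 m; omega
    have e2 : π (1 + M * n) = π 1 + M * n := by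
      have := shifty_mul_int h1 1 M; omega
    have l1 := hmono (1 + m * n) i (by omega)
    have l2 := hmono i (1 + M * n) (by omega)
    omega
  have hsum : ∑ i ∈ Finset.Icc (1:ℤ) (n:ℤ), π i
      = (∑ i ∈ Finset.Icc (1:ℤ) (n:ℤ), i) + (n:ℤ) * c := by
    rw [Finset.sum_congr rfl (fun i _ => hconst i), Finset.sum_add_distrib,
      Finset.sum_const, Int.card_Icc]
    congr 1
    rw [show ((n:ℤ) + 1 - 1) = (n:ℤ) by ring, Int.toNat_natCast]
    simp [mul_comm]
  rw [h2] at hsum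
  have hc0 : c = 0 := by
    have hn' : (0:ℤ) < n := by exact_mod_cast hn
    have : (n:ℤ) * c = 0 := by omega
    exact (mul_eq_zero.mp this).resolve_left (by omega)
  ext i
  simp [hconst i, hc0]

lemma exists_descent (hn : 0 < n) {π : Equiv.Perm ℤ} (hπ : IsAffine n π) (hne : π ≠ 1) :
    ∃ r ∈ Finset.Icc (1:ℤ) (n:ℤ), π (r+1) < π r := by
  by_contra hc
  push_neg at hc
  exact hne (eq_one_of_no_descent hn hπ (fun i hi => not_lt.mpr (hc i hi)))

lemma S_step (hn2 : 2 ≤ n) {π : Equiv.Perm ℤ} (hπ : Shifty n π) (x : ℤ) :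
    S n (π * affS n x) = S n π + 1 ∨ S n π = S n (π * affS n x) + 1 := by
  rcases lt_trichotomy (π x) (π (x+1)) with hlt | heq | hgt
  · exact Or.inl (S_mul_affS hn2 hπ hlt)
  · exact absurd (π.injective heq) (by omega)
  · right
    have hπ' : Shifty n (π * affS n x) := shifty_mul hπ (affS_shifty hn2 x)
    have h2 : (π * affS n x) x < (π * affS n x) (x+1) := by
      simp only [Equiv.Perm.mul_apply, affS_apply_self hn2, affS_apply_succ hn2]
      exact hgt
    have := S_mul_affS hn2 hπ' h2
    rwa [mul_assoc, affS_sq hn2, mul_one] at this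

lemma S_le_length (hn2 : 2 ≤ n) (w : List ℤ) :
    Shifty n ((w.map (affS n)).prod) ∧ S n ((w.map (affS n)).prod) ≤ w.length := by
  induction w using List.reverseRecOn with
  | nil =>
      constructor
      · intro i; simp
      · simp [S_one]
  | append_singleton w x ih =>
      obtain ⟨ihs, ihle⟩ := ih
      rw [List.map_append, List.prod_append]
      simp only [List.map_cons, List.map_nil, List.prod_cons, List.prod_nil, mul_one,
        List.length_append, List.length_cons, List.length_nil]
      constructor
      · exact shifty_mul ihs (affS_shifty hn2 x)
      · rcases S_step hn2 ihs x with h | h <;> omega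

lemma exists_word (hn2 : 2 ≤ n) : ∀ N (π : Equiv.Perm ℤ), IsAffine n π → S n π = N →
    ∃ w : List ℤ, (∀ x ∈ w, 1 ≤ x ∧ x ≤ (n:ℤ)) ∧ (w.map (affS n)).prod = π ∧ w.length = N := by
  have hn : 0 < n := by omega
  intro N
  induction N using Nat.strong_induction_on with
  | _ N ih =>
    intro π hπ hS
    by_cases h1 : π = 1
    · refine ⟨[], by simp, by simp [h1], ?_⟩
      rw [h1, S_one] at hS
      simp [← hS]
    · obtain ⟨r, hrmem, hdesc⟩ := exists_descent hn hπ h1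
      set σ := π * affS n r with hσdef
      have hσaff : IsAffine n σ := isAffine_mul hn hπ (isAffine_affS hn2 r)
      have hkey : S n (σ * affS n r) = S n σ + 1 := by
        apply S_mul_affS hn2 (isAffine_shifty hσaff)
        show σ r < σ (r+1)
        simp only [hσdef, Equiv.Perm.mul_apply, affS_apply_self hn2, affS_apply_succ hn2]
        exact hdesc
      have hback : σ * affS n r = π := by
        rw [hσdef, mul_assoc, affS_sq hn2, mul_one]
      rw [hback, hS] at hkey
      obtain ⟨w, hw1, hw2, hw3⟩ := ih (S n σ) (by omega) σ hσaff rfl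
      refine ⟨w ++ [r], ?_, ?_, ?_⟩
      · intro x hx
        rcases List.mem_append.mp hx with hx | hx
        · exact hw1 x hx
        · rw [List.mem_singleton] at hx
          subst hx
          exact Finset.mem_Icc.mp hrmem
      · rw [List.map_append, List.prod_append, hw2]
        simp [hback]
      · simp [hw3]; omega

lemma wordLength_eq_S (hn2 : 2 ≤ n) {π : Equiv.Perm ℤ} (hπ : IsAffine n π) :
    wordLength n π = S n π := by
  obtain ⟨w, hw1, hw2, hw3⟩ := exists_word hn2 (S n π) π hπ rfl
  have hmem : S n π ∈ {l : ℕ | ∃ w : List ℤ,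
      (∀ x ∈ w, 1 ≤ x ∧ x ≤ (n : ℤ)) ∧ (w.map (affS n)).prod = π ∧ w.length = l} :=
    ⟨w, hw1, hw2, hw3⟩
  apply le_antisymm
  · exact Nat.sInf_le hmem
  · apply le_csInf ⟨_, hmem⟩
    rintro l ⟨w', _, hw'2, hw'3⟩
    rw [← hw'3, ← hw'2]
    exact (S_le_length hn2 w').2


lemma inv_res_fixed (hn : 0 < n) {z : Equiv.Perm ℤ} (hsh : Shifty n z)
    (hzz : ∀ x, z (z x) = x) {i : ℤ} (h : (n:ℤ) ∣ (z i - i)) : z i = i := by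
  obtain ⟨m, hm⟩ := h
  have hm' : m * (n:ℤ) = (n:ℤ) * m := mul_comm _ _
  have h1 : z (z i) = z (i + m * n) := by congr 1; omega
  rw [hzz, shifty_mul_int hsh] at h1
  have hn' : (0:ℤ) < n := by exact_mod_cast hn
  have : (n:ℤ) * m = 0 := by omega
  have : m = 0 := by
    rcases mul_eq_zero.mp this with h | h
    · omega
    · exact h
  omega

lemma lprime_eq (hn : 0 < n) {z : Equiv.Perm ℤ} (hz : IsAffine n z) (hzi : z⁻¹ = z) :
    lprime n z = ((Finset.Icc (1:ℤ) (n:ℤ)).filter (fun i => i < z i)).card := by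
  classical
  haveI : NeZero n := ⟨hn.ne'⟩
  have hzz : ∀ x, z (z x) = x := by
    intro x
    have := perm_inv_apply_self z x
    rwa [hzi] at this
  have hsh : Shifty n z := hz.1
  set f : ZMod n → ZMod n := fun a => ((z ((a.val : ℤ)) : ℤ) : ZMod n) with hf
  set R : ZMod n → ZMod n → Prop := fun a b => ((z ((a.val : ℤ)) : ℤ) : ZMod n) = b with hR
  have hRf : ∀ a b, R a b ↔ f a = b := fun a b => Iff.rfl
  have hvc : ∀ a : ZMod n, (((a.val : ℤ)) : ZMod n) = a := by
    intro a
    push_cast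
    simp [ZMod.natCast_val, ZMod.cast_id]
  have hdvd : ∀ a : ZMod n, (n:ℤ) ∣ (z ((a.val : ℤ)) - ((f a).val : ℤ)) := by
    intro a
    have h1 : ((((f a).val : ℤ)) : ZMod n) = ((z ((a.val : ℤ)) : ℤ) : ZMod n) := hvc (f a)
    rw [ZMod.intCast_eq_intCast_iff, Int.ModEq] at h1
    rw [Int.dvd_iff_emod_eq_zero, Int.sub_emod, h1]
    simp
  have hff : ∀ a, f (f a) = a := by
    intro a
    obtain ⟨m, hm⟩ := hdvd a
    have hm' : m * (n:ℤ) = (n:ℤ) * m := mul_comm _ _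
    have hmneg : (-m) * (n:ℤ) = -(m * (n:ℤ)) := by ring
    have h3 : z (((f a).val : ℤ)) = (a.val : ℤ) + (-m) * n := by
      have e : (((f a).val : ℤ)) = z ((a.val : ℤ)) + (-m) * n := by omega
      rw [e, shifty_mul_int hsh, hzz]
    show ((z (((f a).val : ℤ)) : ℤ) : ZMod n) = a
    rw [h3]
    push_cast
    simp [hvc a]
  -- fixed points of f correspond to integer fixed points
  have hfix : ∀ a : ZMod n, f a = a ↔ z ((a.val : ℤ)) = ((a.val : ℤ)) := by
    intro a
    constructor
    · intro h
      apply inv_res_fixed hn hsh hzz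
      obtain ⟨m, hm⟩ := hdvd a
      have h2 : (f a).val = a.val := by rw [h]
      rw [h2] at hm
      exact ⟨m, hm⟩
    · intro h
      show ((z ((a.val : ℤ)) : ℤ) : ZMod n) = a
      rw [h, hvc]
  set rep : ZMod n → ZMod n := fun a => if (f a).val < a.val then f a else a with hrep
  have hrepdef : ∀ a, rep a = if (f a).val < a.val then f a else a := fun a => rfl
  have hrep_cases : ∀ a, rep a = a ∨ rep a = f a := by
    intro a
    rw [hrepdef]
    split_ifs <;> simp
  have hrep_wd : ∀ a b, R a b → rep a = rep b := by
    intro a b hab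
    rw [hRf] at hab
    subst hab
    rcases lt_trichotomy ((f a).val) a.val with h | h | h
    · rw [hrepdef a, hrepdef (f a), if_pos h, if_neg (by rw [hff]; omega)]
    · have : f a = a := ZMod.val_injective n h
      rw [this]
    · have e1 : rep a = a := by rw [hrepdef, if_neg (by omega)]
      have e2 : rep (f a) = f (f a) := by rw [hrepdef, if_pos (by rw [hff]; omega)]
      rw [e1, e2, hff]
  have hmkrep : ∀ a, Quot.mk R a = Quot.mk R (rep a) := by
    intro a
    rcases hrep_cases a with h | h
    · rw [h]
    · rw [h]
      exact Quot.sound rfl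
  have hrep_ge : ∀ a, (rep a).val ≤ (f (rep a)).val := by
    intro a
    rcases le_or_gt a.val ((f a).val) with h | h
    · rw [hrepdef, if_neg (by omega)]; omega
    · rw [hrepdef, if_pos h, hff]; omega
  set I : Finset (ZMod n) := Finset.image rep Finset.univ with hI
  have hmem : ∀ a, rep a ∈ I := fun a => Finset.mem_image_of_mem rep (Finset.mem_univ a)
  let e : Quot R → {x // x ∈ I} := Quot.lift (fun a => ⟨rep a, hmem a⟩)
    (fun a b hab => Subtype.ext (hrep_wd a b hab))
  have hbij : Function.Bijective e := by
    constructor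
    · intro q1 q2 h
      obtain ⟨a, rfl⟩ := Quot.exists_rep q1
      obtain ⟨b, rfl⟩ := Quot.exists_rep q2
      have h' : (⟨rep a, hmem a⟩ : {x // x ∈ I}) = ⟨rep b, hmem b⟩ := h
      have : rep a = rep b := congrArg Subtype.val h'
      rw [hmkrep a, hmkrep b, this]
    · rintro ⟨x, hx⟩
      obtain ⟨a, _, rfl⟩ := Finset.mem_image.mp hx
      refine ⟨Quot.mk R (rep a), ?_⟩
      have hfix2 : rep (rep a) = rep a := by
        rw [hrepdef (rep a), if_neg (by have := hrep_ge a; omega)]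
      have h1 : e (Quot.mk R (rep a)) = ⟨rep (rep a), hmem (rep a)⟩ := rfl
      rw [h1]
      exact Subtype.ext hfix2
  have hcard1 : Nat.card (Quot R) = I.card := by
    rw [Nat.card_eq_of_bijective e hbij, Nat.card_eq_fintype_card, Fintype.card_coe]
  have hIeq : I = Finset.univ.filter (fun a => a.val ≤ (f a).val) := by
    ext x
    simp only [hI, Finset.mem_image, Finset.mem_filter, Finset.mem_univ, true_and]
    constructor
    · rintro ⟨a, _, rfl⟩
      exact hrep_ge a
    · intro h
      exact ⟨x, by rw [hrepdef, if_neg (by omega)]⟩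
  set mdown : Finset (ZMod n) := Finset.univ.filter (fun a => (f a).val < a.val) with hmdown
  set mup : Finset (ZMod n) := Finset.univ.filter (fun a => a.val < (f a).val) with hmup
  have hIcard : I.card = n - mdown.card := by
    rw [hIeq]
    have hsplit := Finset.card_filter_add_card_filter_not
      (s := (Finset.univ : Finset (ZMod n))) (p := fun a => a.val ≤ (f a).val)
    have huniv : (Finset.univ : Finset (ZMod n)).card = n := by
      rw [Finset.card_univ, ZMod.card]
    have hcompl : Finset.univ.filter (fun a => ¬ a.val ≤ (f a).val) = mdown := by
      rw [hmdown]
      apply Finset.filter_congr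
      intro x _
      simp only [not_le]
    rw [hcompl] at hsplit
    omega
  have hupdown : mup.card = mdown.card := by
    refine Finset.card_nbij' f f ?_ ?_ ?_ ?_
    · intro a ha
      simp only [hmup, Finset.mem_coe, Finset.mem_filter, Finset.mem_univ, true_and] at ha
      simp only [hmdown, Finset.mem_coe, Finset.mem_filter, Finset.mem_univ, true_and]
      rw [hff]; omega
    · intro a ha
      simp only [hmdown, Finset.mem_coe, Finset.mem_filter, Finset.mem_univ, true_and] at ha
      simp only [hmup, Finset.mem_coe, Finset.mem_filter, Finset.mem_univ, true_and]
      rw [hff]; omega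
    · intro a _; exact hff a
    · intro a _; exact hff a
  -- nonfixed points on the ZMod side
  set Znf : Finset (ZMod n) := Finset.univ.filter (fun a => f a ≠ a) with hZnf
  have hZnfcard : Znf.card = mup.card + mdown.card := by
    have hsub : Znf = mup ∪ mdown := by
      ext a
      simp only [hZnf, hmup, hmdown, Finset.mem_filter, Finset.mem_univ, true_and,
        Finset.mem_union]
      constructor
      · intro h
        have : (f a).val ≠ a.val := fun hc => h (ZMod.val_injective n hc)
        omega
      · intro h hc
        rw [hc] at h
        omega
    rw [hsub, Finset.card_union_of_disjoint]
    rw [Finset.disjoint_left]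
    intro a ha hb
    simp only [hmup, Finset.mem_filter] at ha
    simp only [hmdown, Finset.mem_filter] at hb
    omega
  -- nonfixed points on the window side
  set T : Finset ℤ := (Finset.Icc (1:ℤ) (n:ℤ)).filter (fun i => i < z i) with hT
  set Td : Finset ℤ := (Finset.Icc (1:ℤ) (n:ℤ)).filter (fun i => z i < i) with hTd
  set Wnf : Finset ℤ := (Finset.Icc (1:ℤ) (n:ℤ)).filter (fun i => z i ≠ i) with hWnf
  have hWnfcard : Wnf.card = T.card + Td.card := by
    have hsub : Wnf = T ∪ Td := by
      ext i
      simp only [hWnf, hT, hTd, Finset.mem_filter, Finset.mem_union]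
      constructor
      · intro ⟨h1, h2⟩
        rcases lt_trichotomy i (z i) with h | h | h
        · exact Or.inl ⟨h1, h⟩
        · omega
        · exact Or.inr ⟨h1, h⟩
      · intro h
        rcases h with ⟨h1, h2⟩ | ⟨h1, h2⟩ <;> exact ⟨h1, by omega⟩
    rw [hsub, Finset.card_union_of_disjoint]
    rw [Finset.disjoint_left]
    intro a ha hb
    simp only [hT, Finset.mem_filter] at ha
    simp only [hTd, Finset.mem_filter] at hb
    omega
  have hTTd : T.card = Td.card := by
    refine Finset.card_nbij' (fun i => normFst n (z i)) (fun i => normFst n (z i)) ?_ ?_ ?_ ?_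
    · intro i hi
      simp only [hT, Finset.mem_coe, Finset.mem_filter] at hi
      obtain ⟨hiW, hilt⟩ := hi
      simp only [hTd, Finset.mem_coe, Finset.mem_filter]
      refine ⟨normFst_mem hn _, ?_⟩
      obtain ⟨m, hm⟩ := normFst_sub_dvd hn (z i)
      have hm' : m * (n:ℤ) = (n:ℤ) * m := mul_comm _ _
      have : z (normFst n (z i)) = i + m * n := by
        rw [show normFst n (z i) = z i + m * n by omega, shifty_mul_int hsh, hzz]
      omega
    · intro i hi
      simp only [hTd, Finset.mem_coe, Finset.mem_filter] at hi
      obtain ⟨hiW, hilt⟩ := hi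
      simp only [hT, Finset.mem_coe, Finset.mem_filter]
      refine ⟨normFst_mem hn _, ?_⟩
      obtain ⟨m, hm⟩ := normFst_sub_dvd hn (z i)
      have hm' : m * (n:ℤ) = (n:ℤ) * m := mul_comm _ _
      have : z (normFst n (z i)) = i + m * n := by
        rw [show normFst n (z i) = z i + m * n by omega, shifty_mul_int hsh, hzz]
      omega
    · intro i hi
      simp only [hT, Finset.mem_coe, Finset.mem_filter] at hi
      obtain ⟨m, hm⟩ := normFst_sub_dvd hn (z i)
      have hm' : m * (n:ℤ) = (n:ℤ) * m := mul_comm _ _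
      have h1 : z (normFst n (z i)) = i + m * n := by
        rw [show normFst n (z i) = z i + m * n by omega, shifty_mul_int hsh, hzz]
      show normFst n (z (normFst n (z i))) = i
      rw [h1, normFst_add_mul hn, normFst_eq_self hn hi.1]
    · intro i hi
      simp only [hTd, Finset.mem_coe, Finset.mem_filter] at hi
      obtain ⟨m, hm⟩ := normFst_sub_dvd hn (z i)
      have hm' : m * (n:ℤ) = (n:ℤ) * m := mul_comm _ _
      have h1 : z (normFst n (z i)) = i + m * n := by
        rw [show normFst n (z i) = z i + m * n by omega, shifty_mul_int hsh, hzz]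
      show normFst n (z (normFst n (z i))) = i
      rw [h1, normFst_add_mul hn, normFst_eq_self hn hi.1]
  -- transfer nonfixed counts between the window and ZMod n
  have hwin_cast : ∀ i : ℤ, (n:ℤ) ∣ ((((i : ZMod n)).val : ℤ) - i) := by
    intro i
    have h1 : (((((i : ZMod n)).val : ℤ)) : ZMod n) = ((i : ℤ) : ZMod n) := by
      rw [hvc]
    rw [ZMod.intCast_eq_intCast_iff, Int.ModEq] at h1
    rw [Int.dvd_iff_emod_eq_zero, Int.sub_emod, h1]
    simp
  have hfcast : ∀ i : ℤ, f ((i : ZMod n)) = ((z i : ℤ) : ZMod n) := by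
    intro i
    obtain ⟨m, hm⟩ := hwin_cast i
    have hm' : m * (n:ℤ) = (n:ℤ) * m := mul_comm _ _
    have h3 : z ((((i : ZMod n)).val : ℤ)) = z i + m * n := by
      rw [show ((((i : ZMod n)).val : ℤ)) = i + m * n by omega, shifty_mul_int hsh]
    show ((z ((((i : ZMod n)).val : ℤ)) : ℤ) : ZMod n) = _
    rw [h3]
    push_cast
    simp
  have hWZnf : Wnf.card = Znf.card := by
    refine Finset.card_nbij' (fun i => ((i : ZMod n))) (fun a => normFst n ((a.val : ℤ)))
      ?_ ?_ ?_ ?_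
    · intro i hi
      simp only [hWnf, Finset.mem_coe, Finset.mem_filter] at hi
      simp only [hZnf, Finset.mem_coe, Finset.mem_filter, Finset.mem_univ, true_and]
      rw [hfcast i]
      intro hc
      rw [ZMod.intCast_eq_intCast_iff] at hc
      have hzi2 : z i = i := inv_res_fixed hn hsh hzz (Int.ModEq.dvd hc.symm)
      exact hi.2 hzi2
    · intro a ha
      simp only [hZnf, Finset.mem_coe, Finset.mem_filter, Finset.mem_univ, true_and] at ha
      simp only [hWnf, Finset.mem_coe, Finset.mem_filter]
      refine ⟨normFst_mem hn _, ?_⟩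
      obtain ⟨m, hm⟩ := normFst_sub_dvd hn ((a.val : ℤ))
      have hm' : m * (n:ℤ) = (n:ℤ) * m := mul_comm _ _
      have h1 : z (normFst n ((a.val : ℤ))) = z ((a.val : ℤ)) + m * n := by
        rw [show normFst n ((a.val : ℤ)) = (a.val : ℤ) + m * n by omega, shifty_mul_int hsh]
      intro hc
      rw [h1] at hc
      have : z ((a.val : ℤ)) = ((a.val : ℤ)) := by omega
      exact ha ((hfix a).mpr this)
    · intro i hi
      simp only [hWnf, Finset.mem_coe, Finset.mem_filter] at hi
      obtain ⟨m, hm⟩ := hwin_cast i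
      have hm' : m * (n:ℤ) = (n:ℤ) * m := mul_comm _ _
      show normFst n ((((i : ZMod n)).val : ℤ)) = i
      rw [show ((((i : ZMod n)).val : ℤ)) = i + m * n by omega, normFst_add_mul hn,
        normFst_eq_self hn hi.1]
    · intro a _
      obtain ⟨m, hm⟩ := normFst_sub_dvd hn ((a.val : ℤ))
      have hm' : m * (n:ℤ) = (n:ℤ) * m := mul_comm _ _
      show (((normFst n ((a.val : ℤ))) : ℤ) : ZMod n) = a
      rw [show normFst n ((a.val : ℤ)) = (a.val : ℤ) + m * n by omega]
      push_cast
      simp [hvc a]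
  -- final arithmetic
  have hml : mdown.card ≤ n := by
    have : mdown.card ≤ (Finset.univ : Finset (ZMod n)).card := Finset.card_le_card
      (Finset.filter_subset _ _)
    rwa [Finset.card_univ, ZMod.card] at this
  rw [lprime]
  rw [show (Quot fun a b : ZMod n => ((z ((a.val : ℤ)) : ℤ) : ZMod n) = b) = Quot R from rfl]
  omega

lemma invol_count {α : Type*} [DecidableEq α] (I M F : Finset α) (g : α → α)
    (hMI : M ⊆ I) (hFI : F ⊆ M) (hg : ∀ p ∈ I, g p ∈ I) (hgg : ∀ p ∈ I, g (g p) = p)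
    (hfixF : ∀ p ∈ I, (g p = p ↔ p ∈ F))
    (hone : ∀ p ∈ M, p ∉ F → g p ∉ M)
    (hcov : ∀ p ∈ I, p ∉ M → g p ∈ M) :
    I.card + F.card = 2 * M.card := by
  have hbij : (I \ M).card = (M \ F).card := by
    refine Finset.card_nbij' g g ?_ ?_ ?_ ?_
    · intro p hp
      rw [Finset.mem_coe, Finset.mem_sdiff] at hp; rw [Finset.mem_coe, Finset.mem_sdiff]
      obtain ⟨hpI, hpM⟩ := hp
      refine ⟨hcov p hpI hpM, ?_⟩
      intro hgpF
      have : g (g p) = g p := (hfixF (g p) (hg p hpI)).mpr hgpF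
      rw [hgg p hpI] at this
      exact hpM (this ▸ hcov p hpI hpM)
    · intro q hq
      rw [Finset.mem_coe, Finset.mem_sdiff] at hq; rw [Finset.mem_coe, Finset.mem_sdiff]
      obtain ⟨hqM, hqF⟩ := hq
      exact ⟨hg q (hMI hqM), hone q hqM hqF⟩
    · intro p hp
      rw [Finset.mem_coe, Finset.mem_sdiff] at hp
      exact hgg p hp.1
    · intro q hq
      rw [Finset.mem_coe, Finset.mem_sdiff] at hq
      exact hgg q (hMI hq.1)
  have h1 : (I \ M).card = I.card - M.card := Finset.card_sdiff_of_subset hMI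
  have h2 : (M \ F).card = M.card - F.card := Finset.card_sdiff_of_subset hFI
  have h3 : M.card ≤ I.card := Finset.card_le_card hMI
  have h4 : F.card ≤ M.card := Finset.card_le_card hFI
  omega

lemma pairing (hn : 0 < n) {z : Equiv.Perm ℤ} (hz : IsAffine n z) (hzi : z⁻¹ = z) :
    S n z + ((Finset.Icc (1:ℤ) (n:ℤ)).filter (fun i => i < z i)).card
      = 2 * ∑ i ∈ Finset.Icc (1:ℤ) (n:ℤ), icodeEntry z i := by
  classical
  have hsh : Shifty n z := hz.1
  have hzz : ∀ x, z (z x) = x := by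
    intro x
    have := perm_inv_apply_self z x
    rwa [hzi] at this
  have hIfin : (pairSet n (fun i j => i < j ∧ z j < z i)).Finite :=
    pairSet_finite _ (fun i => inv_row_finite hn hsh i)
  have hMrow : ∀ i, {j | i < j ∧ z j < z i ∧ z j ≤ i}.Finite := by
    intro i
    apply Set.Finite.subset (inv_row_finite hn hsh i)
    rintro j ⟨h1, h2, _⟩
    exact ⟨h1, h2⟩
  have hMfin : (pairSet n (fun i j => i < j ∧ z j < z i ∧ z j ≤ i)).Finite :=
    pairSet_finite _ hMrow
  set I : Finset (ℤ × ℤ) := hIfin.toFinset with hIdef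
  set M : Finset (ℤ × ℤ) := hMfin.toFinset with hMdef
  set T : Finset ℤ := (Finset.Icc (1:ℤ) (n:ℤ)).filter (fun i => i < z i) with hTdef
  set F : Finset (ℤ × ℤ) := T.image (fun i => (i, z i)) with hFdef
  set g : ℤ × ℤ → ℤ × ℤ := fun p => nu n (z p.2, z p.1) with hgdef
  have hmemI : ∀ p : ℤ × ℤ, p ∈ I ↔
      (p.1 ∈ Finset.Icc (1:ℤ) (n:ℤ) ∧ p.1 < p.2 ∧ z p.2 < z p.1) := by
    intro p
    rw [hIdef, Set.Finite.mem_toFinset]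
    exact Iff.rfl
  have hmemM : ∀ p : ℤ × ℤ, p ∈ M ↔
      (p.1 ∈ Finset.Icc (1:ℤ) (n:ℤ) ∧ p.1 < p.2 ∧ z p.2 < z p.1 ∧ z p.2 ≤ p.1) := by
    intro p
    rw [hMdef, Set.Finite.mem_toFinset]
    exact Iff.rfl
  -- the key computation for g
  have hgcomp : ∀ a b : ℤ, ∃ m : ℤ, (n:ℤ) ∣ m * n ∧
      g (a, b) = (z b + m * n, z a + m * n) ∧ normFst n (z b) = z b + m * n := by
    intro a b
    obtain ⟨m, hm⟩ := normFst_sub_dvd hn (z b)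
    have hm' : m * (n:ℤ) = (n:ℤ) * m := mul_comm _ _
    refine ⟨m, ⟨m, by ring⟩, ?_, by omega⟩
    simp only [hgdef, nu, Prod.mk.injEq]
    constructor <;> omega
  have hMI : M ⊆ I := by
    intro p hp
    rw [hmemM] at hp
    rw [hmemI]
    exact ⟨hp.1, hp.2.1, hp.2.2.1⟩
  have hFM : F ⊆ M := by
    intro p hp
    rw [hFdef, Finset.mem_image] at hp
    obtain ⟨i, hi, rfl⟩ := hp
    rw [hTdef, Finset.mem_filter] at hi
    rw [hmemM]
    dsimp only
    rw [hzz]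
    exact ⟨hi.1, hi.2, by omega, by omega⟩
  have hgI : ∀ p ∈ I, g p ∈ I := by
    rintro ⟨a, b⟩ hp
    rw [hmemI] at hp ⊢
    obtain ⟨hW, hab, hinv⟩ := hp
    dsimp only at hW hab hinv
    obtain ⟨m, _, heq, hnf⟩ := hgcomp a b
    rw [heq]
    refine ⟨?_, by dsimp only; omega, ?_⟩
    · show z b + m * n ∈ _
      rw [show z b + m * (n:ℤ) = normFst n (z b) by omega]
      exact normFst_mem hn _
    · show z (z a + m * n) < z (z b + m * n)
      rw [shifty_mul_int hsh, shifty_mul_int hsh, hzz, hzz]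
      omega
  have hggI : ∀ p ∈ I, g (g p) = p := by
    rintro ⟨a, b⟩ hp
    rw [hmemI] at hp
    obtain ⟨hW, hab, hinv⟩ := hp
    dsimp only at hW hab hinv
    obtain ⟨m, _, heq, hnf⟩ := hgcomp a b
    rw [heq]
    obtain ⟨m2, _, hexp2, hnf2⟩ := hgcomp (z b + m * n) (z a + m * n)
    rw [hexp2]
    have e1 : z (z a + m * n) = a + m * n := by rw [shifty_mul_int hsh, hzz]
    have e2 : z (z b + m * n) = b + m * n := by rw [shifty_mul_int hsh, hzz]
    rw [e1] at hnf2
    have : normFst n (a + m * n) = a := by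
      rw [normFst_add_mul hn, normFst_eq_self hn hW]
    rw [e1, e2]
    have hm2 : m2 * (n:ℤ) = - (m * (n:ℤ)) := by omega
    rw [Prod.mk.injEq]
    constructor <;> omega
  have hfixF : ∀ p ∈ I, (g p = p ↔ p ∈ F) := by
    rintro ⟨a, b⟩ hp
    rw [hmemI] at hp
    obtain ⟨hW, hab, hinv⟩ := hp
    dsimp only at hW hab hinv
    obtain ⟨m, _, heq, hnf⟩ := hgcomp a b
    constructor
    · intro hfix
      rw [heq, Prod.mk.injEq] at hfix
      obtain ⟨h1, h2⟩ := hfix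
      -- z b = a - mn and z a = b - mn; apply z to first
      have e1 : z (z b + m * n) = b + m * n := by rw [shifty_mul_int hsh, hzz]
      rw [h1] at e1
      -- e1 : z a = b + mn, h2 : z a = b - mn  => m n = 0
      have hmn : m * (n:ℤ) = 0 := by omega
      have hzb : z b = a := by omega
      have hza : z a = b := by omega
      rw [hFdef, Finset.mem_image]
      refine ⟨a, ?_, by rw [hza]⟩
      rw [hTdef, Finset.mem_filter]
      exact ⟨hW, by omega⟩
    · intro hF
      rw [hFdef, Finset.mem_image] at hF
      obtain ⟨i2, hi2, hieq⟩ := hF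
      rw [Prod.mk.injEq] at hieq
      obtain ⟨h1, h2⟩ := hieq
      rw [heq]
      have hzb : z b = a := by rw [← h2, hzz, h1]
      rw [hzb] at hnf
      have hne : normFst n a = a := normFst_eq_self hn hW
      have hmn : m * (n:ℤ) = 0 := by omega
      have hza : z a = b := by rw [← h1, h2]
      rw [Prod.mk.injEq]
      constructor <;> omega
  have hone : ∀ p ∈ M, p ∉ F → g p ∉ M := by
    rintro ⟨a, b⟩ hp hpF hgM
    rw [hmemM] at hp
    obtain ⟨hW, hab, hinv, hmark⟩ := hp
    dsimp only at hW hab hinv hmark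
    obtain ⟨m, _, heq, hnf⟩ := hgcomp a b
    rw [heq, hmemM] at hgM
    obtain ⟨_, _, _, hmark2⟩ := hgM
    dsimp only at hmark2
    rw [shifty_mul_int hsh, hzz] at hmark2
    -- hmark2 : a + mn ≤ z b + mn, hmark : z b ≤ a
    have hzb : z b = a := by omega
    apply hpF
    rw [← (hfixF (a, b) (by rw [hmemI]; exact ⟨hW, hab, hinv⟩))]
    rw [heq]
    have hza : z a = b := by rw [← hzb, hzz]
    have e1 : z (z b + m * n) = b + m * n := by rw [shifty_mul_int hsh, hzz]
    rw [hzb] at e1 hnf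
    have : normFst n a = a := normFst_eq_self hn hW
    have hmn : m * (n:ℤ) = 0 := by omega
    rw [Prod.mk.injEq]
    constructor <;> omega
  have hcov : ∀ p ∈ I, p ∉ M → g p ∈ M := by
    rintro ⟨a, b⟩ hp hpM
    rw [hmemI] at hp
    obtain ⟨hW, hab, hinv⟩ := hp
    dsimp only at hW hab hinv
    have hnm : ¬ (z b ≤ a) := by
      intro hc
      exact hpM (by rw [hmemM]; exact ⟨hW, hab, hinv, hc⟩)
    obtain ⟨m, _, heq, hnf⟩ := hgcomp a b
    have hgI2 := hgI (a, b) (by rw [hmemI]; exact ⟨hW, hab, hinv⟩)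
    rw [heq] at hgI2 ⊢
    rw [hmemI] at hgI2
    rw [hmemM]
    refine ⟨hgI2.1, hgI2.2.1, hgI2.2.2, ?_⟩
    dsimp only
    rw [shifty_mul_int hsh, hzz]
    omega
  have hcount := invol_count I M F g hMI hFM hgI hggI hfixF hone hcov
  have hF : F.card = T.card := by
    rw [hFdef]
    apply Finset.card_image_of_injective
    intro x y hxy
    rw [Prod.mk.injEq] at hxy
    exact hxy.1
  have hScard : S n z = I.card := by
    rw [S_eq_card hn hsh, Nat.card_coe_set_eq, Set.ncard_eq_toFinset_card _ hIfin]
  have hsum : ∑ i ∈ Finset.Icc (1:ℤ) (n:ℤ), icodeEntry z i = M.card := by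
    have h0 : Nat.card (pairSet n (fun i j => i < j ∧ z j < z i ∧ z j ≤ i)) =
        ∑ i ∈ Finset.Icc (1:ℤ) (n:ℤ), Nat.card {j | i < j ∧ z j < z i ∧ z j ≤ i} :=
      pairSet_card _ hMrow
    have h1 : ∑ i ∈ Finset.Icc (1:ℤ) (n:ℤ), icodeEntry z i =
        ∑ i ∈ Finset.Icc (1:ℤ) (n:ℤ), Nat.card {j | i < j ∧ z j < z i ∧ z j ≤ i} := rfl
    rw [h1, ← h0, Nat.card_coe_set_eq, Set.ncard_eq_toFinset_card _ hMfin]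
  omega

lemma icode_row_finite (hn : 0 < n) {z : Equiv.Perm ℤ} (hsh : Shifty n z) (i : ℤ) :
    {j : ℤ | i < j ∧ z j < z i ∧ z j ≤ i}.Finite := by
  apply Set.Finite.subset (inv_row_finite hn hsh i)
  rintro j ⟨h1, h2, _⟩
  exact ⟨h1, h2⟩

lemma visible_descent_iff (hn : 0 < n) {z : Equiv.Perm ℤ} (hsh : Shifty n z) (i : ℤ) :
    (z (i+1) < z i ∧ z (i+1) ≤ i) ↔ icodeEntry z (i+1) < icodeEntry z i := by
  classical
  set Mi : Set ℤ := {j | i < j ∧ z j < z i ∧ z j ≤ i} with hMi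
  set Mi1 : Set ℤ := {j | i + 1 < j ∧ z j < z (i+1) ∧ z j ≤ i + 1} with hMi1
  have hMifin : Mi.Finite := icode_row_finite hn hsh i
  have hMi1fin : Mi1.Finite := icode_row_finite hn hsh (i+1)
  have hci : icodeEntry z i = Mi.ncard := Nat.card_coe_set_eq _
  have hci1 : icodeEntry z (i+1) = Mi1.ncard := Nat.card_coe_set_eq _
  constructor
  · rintro ⟨hd1, hd2⟩
    have hmem : (i + 1) ∈ Mi := ⟨by omega, hd1, hd2⟩
    have hsub : Mi1 ⊆ Mi \ {i + 1} := by
      rintro j ⟨h1, h2, h3⟩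
      refine ⟨⟨by omega, by omega, by omega⟩, by simp; omega⟩
    have h4 : Mi1.ncard ≤ (Mi \ {i+1}).ncard :=
      Set.ncard_le_ncard hsub (hMifin.subset Set.diff_subset)
    have h5 : (Mi \ {i+1}).ncard + 1 = Mi.ncard :=
      Set.ncard_diff_singleton_add_one hmem hMifin
    omega
  · intro hlt
    by_contra hc
    -- not a visible descent: then Mi ⊆ Mi1
    have hsub : Mi ⊆ Mi1 := by
      rintro j ⟨h1, h2, h3⟩
      have hji : j ≠ i + 1 := by
        intro hj
        subst hj
        exact hc ⟨h2, h3⟩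
      have hne : z i ≠ z (i+1) := fun hzc => by
        have := z.injective hzc
        omega
      rcases lt_or_gt_of_ne hne with hlt2 | hgt2
      · exact ⟨by omega, by omega, by omega⟩
      · -- z (i+1) < z i; then ¬ (z (i+1) ≤ i), so z(i+1) ≥ i+1 > z j
        have : ¬ (z (i+1) ≤ i) := fun hcc => hc ⟨hgt2, hcc⟩
        exact ⟨by omega, by omega, by omega⟩
    have := Set.ncard_le_ncard hsub hMi1fin
    omega

lemma icodeEntry_one (i : ℤ) : icodeEntry 1 i = 0 := by
  have : IsEmpty {j : ℤ // i < j ∧ (1 : Equiv.Perm ℤ) j < (1 : Equiv.Perm ℤ) i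
      ∧ (1 : Equiv.Perm ℤ) j ≤ i} := by
    refine ⟨fun ⟨j, h1, h2, h3⟩ => ?_⟩
    simp only [Equiv.Perm.one_apply] at h2 h3
    omega
  exact Nat.card_of_isEmpty


end MZAux

/-- `ℓ̂(z) = (ℓ(z) + ℓ'(z))/2` equals the sum of the involution code
entries, and `i` is a visible descent of `z` iff `ĉ_i > ĉ_{i+1}` (indices mod `n`;
here the involution code entries are defined for all `i ∈ ℤ`, which interprets the
indices cyclically). -/
theorem icode_sum_and_visible_descents (n : ℕ) (hn : 0 < n)
    (z : Equiv.Perm ℤ) (hz : IsAffine n z) (hzi : z⁻¹ = z) :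
    wordLength n z + lprime n z =
      2 * ∑ i ∈ Finset.Icc (1 : ℤ) (n : ℤ), icodeEntry z i ∧
    ∀ i : ℤ, (z (i + 1) < z i ∧ z (i + 1) ≤ i) ↔
      icodeEntry z (i + 1) < icodeEntry z i := by
  by_cases hn2 : 2 ≤ n
  · constructor
    · rw [MZAux.wordLength_eq_S hn2 hz, MZAux.lprime_eq hn hz hzi]
      exact MZAux.pairing hn hz hzi
    · intro i
      exact MZAux.visible_descent_iff hn hz.1 i
  · have hn1 : n = 1 := by omega
    subst hn1
    have hz1 : z = 1 := by
      have h1 : z 1 = 1 := by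
        have := hz.2
        simpa using this
      ext i
      have h3 := MZAux.shifty_mul_int hz.1 1 (i - 1)
      rw [show (1:ℤ) + (i - 1) * ((1:ℕ):ℤ) = i by push_cast; ring] at h3
      rw [h3, h1]
      push_cast
      simp
    subst hz1
    constructor
    · have hw : wordLength 1 1 = 0 := by
        apply Nat.eq_zero_of_le_zero
        apply Nat.sInf_le
        exact ⟨[], by simp, by simp, rfl⟩
      have hl : lprime 1 1 = 0 := by
        rw [MZAux.lprime_eq hn MZAux.isAffine_one inv_one]
        simp
      have hs : ∑ i ∈ Finset.Icc (1 : ℤ) ((1:ℕ) : ℤ), icodeEntry 1 i = 0 := by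
        apply Finset.sum_eq_zero
        intro i _
        exact MZAux.icodeEntry_one i
      rw [hw, hl, hs]
    · intro i
      simp only [MZAux.icodeEntry_one, Equiv.Perm.one_apply, lt_self_iff_false, iff_false,
        not_and]
      omega
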